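/- With A and J the n×n complex matrices defined in the context, one has J·A = A, A·J = A, and A³ = −A. -/

import Mathlib

open Matrix

/-- With `A` and `J` the `n×n` complex matrices defined in the context
(block form with blocks of sizes `1` and `n-1`), one has `J·A = A`, `A·J = A` and `A³ = −A`. -/
theorem stmt_2 (n : ℕ) (hn : 2 ≤ n) (z : ℂ) (hz : z + starRingEnd ℂ z = 0)
    (v : Fin (n - 1) → ℂ) (hv : v ≠ 0)
    (hnorm : z * starRingEnd ℂ z + ∑ i, starRingEnd ℂ (v i) * v i = 1)
    (A J : Matrix (Fin 1 ⊕ Fin (n - 1)) (Fin 1 ⊕ Fin (n - 1)) ℂ)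
    (hA : A = Matrix.fromBlocks
      (Matrix.of fun _ _ => z)
      (Matrix.of fun _ j => -starRingEnd ℂ (v j))
      (Matrix.of fun i _ => v i)
      (Matrix.of fun i j =>
        -(v i * z * starRingEnd ℂ (v j)) / (∑ k, starRingEnd ℂ (v k) * v k)))
    (hJ : J = Matrix.fromBlocks 1 0 0
      (Matrix.of fun i j =>
        v i * starRingEnd ℂ (v j) / (∑ k, starRingEnd ℂ (v k) * v k))) :
    J * A = A ∧ A * J = A ∧ A ^ 3 = -A := by
  set s : ℂ := ∑ k, starRingEnd ℂ (v k) * v k with hs_def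
  have hs : s ≠ 0 := by
    have h1 : s = ((∑ k, Complex.normSq (v k) : ℝ) : ℂ) := by
      push_cast
      exact Finset.sum_congr rfl fun k _ => (Complex.normSq_eq_conj_mul_self).symm
    obtain ⟨i, hi⟩ := Function.ne_iff.mp hv
    rw [h1]
    exact_mod_cast ne_of_gt (Finset.sum_pos' (fun k _ => Complex.normSq_nonneg _)
      ⟨i, Finset.mem_univ i, Complex.normSq_pos.mpr hi⟩)
  have key : ∀ c : ℂ, ∑ k, c * (starRingEnd ℂ (v k) * v k) = c * s := fun c =>
    (Finset.mul_sum _ _ _).symm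
  have hzsq : z * z = s - 1 := by linear_combination z * hz - hnorm
  have hJA : J * A = A := by
    rw [hJ, hA, fromBlocks_multiply]
    ext i j
    rcases i with i | i <;> rcases j with j | j <;> simp [mul_apply, Matrix.one_apply]
    · calc ∑ x, v i * starRingEnd ℂ (v x) / s * v x
          = ∑ x, (v i / s) * (starRingEnd ℂ (v x) * v x) :=
            Finset.sum_congr rfl fun x _ => by ring
        _ = (v i / s) * s := key _
        _ = v i := by field_simp
    · calc ∑ x, v i * starRingEnd ℂ (v x) / s * (-(v x * z * starRingEnd ℂ (v j)) / s)
          = ∑ x, (-(v i * z * starRingEnd ℂ (v j)) / (s * s)) *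
              (starRingEnd ℂ (v x) * v x) := Finset.sum_congr rfl fun x _ => by ring
        _ = (-(v i * z * starRingEnd ℂ (v j)) / (s * s)) * s := key _
        _ = -(v i * z * starRingEnd ℂ (v j)) / s := by field_simp
  have hAJ : A * J = A := by
    rw [hJ, hA, fromBlocks_multiply]
    ext i j
    rcases i with i | i <;> rcases j with j | j <;> simp [mul_apply, Matrix.one_apply]
    · calc ∑ x, starRingEnd ℂ (v x) * (v x * starRingEnd ℂ (v j) / s)
          = ∑ x, (starRingEnd ℂ (v j) / s) * (starRingEnd ℂ (v x) * v x) :=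
            Finset.sum_congr rfl fun x _ => by ring
        _ = (starRingEnd ℂ (v j) / s) * s := key _
        _ = starRingEnd ℂ (v j) := by field_simp
    · calc ∑ x, -(v i * z * starRingEnd ℂ (v x)) / s * (v x * starRingEnd ℂ (v j) / s)
          = ∑ x, (-(v i * z * starRingEnd ℂ (v j)) / (s * s)) *
              (starRingEnd ℂ (v x) * v x) := Finset.sum_congr rfl fun x _ => by ring
        _ = (-(v i * z * starRingEnd ℂ (v j)) / (s * s)) * s := key _
        _ = -(v i * z * starRingEnd ℂ (v j)) / s := by field_simp
  have hAA : A * A = -J := by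
    rw [hJ, hA, fromBlocks_multiply]
    ext i j
    rcases i with i | i <;> rcases j with j | j <;> simp [mul_apply, Matrix.one_apply]
    · rw [if_pos (Subsingleton.elim i j), ← hs_def]
      linear_combination hzsq
    · have h2 : ∑ x, starRingEnd ℂ (v x) * (-(v x * z * starRingEnd ℂ (v j)) / s)
          = (-(z * starRingEnd ℂ (v j)) / s) * s := by
        rw [← key]
        exact Finset.sum_congr rfl fun x _ => by ring
      rw [h2]
      field_simp
      ring
    · have h2 : ∑ x, -(v i * z * starRingEnd ℂ (v x)) / s * v x
          = (-(v i * z) / s) * s := by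
        rw [← key]
        exact Finset.sum_congr rfl fun x _ => by ring
      rw [h2]
      field_simp
      ring
    · have h2 : ∑ x, -(v i * z * starRingEnd ℂ (v x)) / s *
            (-(v x * z * starRingEnd ℂ (v j)) / s)
          = ((v i * (z * z) * starRingEnd ℂ (v j)) / (s * s)) * s := by
        rw [← key]
        exact Finset.sum_congr rfl fun x _ => by ring
      rw [h2, hzsq]
      field_simp
      ring
  refine ⟨hJA, hAJ, ?_⟩
  calc A ^ 3 = (A * A) * A := by rw [pow_succ, pow_two]
    _ = -(J * A) := by rw [hAA, neg_mul]
    _ = -A := by rw [hJA]
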